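/- arXiv:2605.08624 — 2 statements merged into one kernel-verified Lean document; each statement's English description precedes it below -/
import Mathlib

section
/- For every integer k ≤ 1, the natural density of the set {n ∈ ℕ : s(n+1) − s(n) = k} exists and equals (1/2)^{2−k}, i.e. lim_{N→∞} (1/N)·|{n < N : s(n+1) − s(n) = k}| = (1/2)^{2−k}. -/
/-- `s n` is the number of ones in the binary expansion of `n`,
i.e. the sum of the binary digits of `n`. -/
def s (n : ℕ) : ℕ := (Nat.digits 2 n).sum

lemma s_eq (n : ℕ) (hn : n ≠ 0) : s n = n % 2 + s (n / 2) := by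
  unfold s
  rw [Nat.digits_def' (by norm_num) (Nat.pos_of_ne_zero hn), List.sum_cons]

lemma s_two_mul (n : ℕ) : s (2 * n) = s n := by
  rcases Nat.eq_zero_or_pos n with h | h
  · simp [h]
  · rw [s_eq (2 * n) (by omega)]
    have h1 : 2 * n % 2 = 0 := by omega
    have h2 : 2 * n / 2 = n := by omega
    rw [h1, h2, Nat.zero_add]

lemma s_two_mul_add_one (n : ℕ) : s (2 * n + 1) = s n + 1 := by
  rw [s_eq (2 * n + 1) (by omega)]
  have h1 : (2 * n + 1) % 2 = 1 := by omega
  have h2 : (2 * n + 1) / 2 = n := by omega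
  rw [h1, h2]
  omega

lemma key : ∀ (j n : ℕ), n % 2 ^ (j + 1) = 2 ^ j - 1 →
    (s (n + 1) : ℤ) - (s n : ℤ) = 1 - j := by
  intro j
  induction j with
  | zero =>
    intro n h
    simp only [pow_one, pow_zero] at h
    obtain ⟨m, hm⟩ : ∃ m, n = 2 * m := ⟨n / 2, by omega⟩
    subst hm
    rw [s_two_mul, show 2 * m + 1 = 2 * m + 1 from rfl, s_two_mul_add_one]
    push_cast; ring
  | succ j ih =>
    intro n h
    have hP : 1 ≤ 2 ^ j := Nat.one_le_two_pow
    have e1 : (2:ℕ) ^ (j + 1) = 2 ^ j * 2 := pow_succ 2 j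
    have e2 : (2:ℕ) ^ (j + 2) = 2 ^ (j + 1) * 2 := pow_succ 2 (j+1)
    obtain ⟨q, hq⟩ : ∃ q, n = 2 ^ (j + 2) * q + (2 ^ (j + 1) - 1) :=
      ⟨n / 2 ^ (j + 2), by rw [← h]; exact (Nat.div_add_mod n (2 ^ (j + 2))).symm⟩
    set m := 2 ^ (j + 1) * q + (2 ^ j - 1) with hm
    have hq2 : 2 ^ (j + 2) * q = 2 ^ (j + 1) * q * 2 := by rw [e2]; ring
    have hn2 : n = 2 * m + 1 := by omega
    have hmmod : m % 2 ^ (j + 1) = 2 ^ j - 1 := by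
      rw [hm, Nat.mul_add_mod]
      exact Nat.mod_eq_of_lt (by omega)
    have hIH := ih m hmmod
    rw [hn2]
    have hsucc : 2 * m + 1 + 1 = 2 * (m + 1) := by ring
    rw [hsucc, s_two_mul, s_two_mul_add_one]
    push_cast at hIH ⊢
    linarith

lemma exists_j : ∀ n : ℕ, ∃ j, n % 2 ^ (j + 1) = 2 ^ j - 1 := by
  intro n
  induction n using Nat.strong_induction_on with
  | _ n ih =>
    rcases Nat.even_or_odd n with ⟨m, hm⟩ | ⟨m, hm⟩
    · exact ⟨0, by simp only [pow_one, pow_zero]; omega⟩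
    · obtain ⟨j, hj⟩ := ih m (by omega)
      refine ⟨j + 1, ?_⟩
      have hP : 1 ≤ 2 ^ j := Nat.one_le_two_pow
      have e1 : (2:ℕ) ^ (j + 1) = 2 ^ j * 2 := pow_succ 2 j
      have e2 : (2:ℕ) ^ (j + 2) = 2 ^ (j + 1) * 2 := pow_succ 2 (j+1)
      obtain ⟨q, hq⟩ : ∃ q, m = 2 ^ (j + 1) * q + (2 ^ j - 1) :=
        ⟨m / 2 ^ (j + 1), by rw [← hj]; exact (Nat.div_add_mod m (2 ^ (j + 1))).symm⟩
      have hq2 : 2 ^ (j + 2) * q = 2 ^ (j + 1) * q * 2 := by rw [e2]; ring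
      have hn : n = 2 ^ (j + 2) * q + (2 ^ (j + 1) - 1) := by omega
      rw [hn, Nat.mul_add_mod]
      exact Nat.mod_eq_of_lt (by omega)

lemma diff_iff (j n : ℕ) :
    (s (n + 1) : ℤ) - (s n : ℤ) = 1 - j ↔ n % 2 ^ (j + 1) = 2 ^ j - 1 := by
  constructor
  · intro h
    obtain ⟨j', hj'⟩ := exists_j n
    have h' := key j' n hj'
    have : j' = j := by omega
    exact this ▸ hj'
  · exact key j n

/-- For every integer `k ≤ 1`, the natural density of `{n : s(n+1) - s(n) = k}`
exists and equals `(1/2)^(2-k)`. -/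
theorem density_s_succ_sub_s (k : ℤ) (hk : k ≤ 1) :
    Filter.Tendsto
      (fun N : ℕ =>
        (((Finset.range N).filter fun n => (s (n + 1) : ℤ) - (s n : ℤ) = k).card : ℝ) / N)
      Filter.atTop (nhds ((1/2 : ℝ) ^ (2 - k))) := by
  set j : ℕ := (1 - k).toNat with hj
  have hjk : (j : ℤ) = 1 - k := Int.toNat_of_nonneg (by omega)
  set m : ℕ := 2 ^ (j + 1) with hmdef
  have hm : 0 < m := Nat.pow_pos (by norm_num)
  have hm1 : (1:ℝ) ≤ (m:ℝ) := by exact_mod_cast hm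
  have hmR : (0:ℝ) < (m:ℝ) := by positivity
  -- rewrite the target value
  have hval : (1/2 : ℝ) ^ (2 - k) = 1 / (m : ℝ) := by
    have h2k : 2 - k = ((j + 1 : ℕ) : ℤ) := by push_cast; omega
    rw [h2k, zpow_natCast, hmdef]
    push_cast
    rw [div_pow, one_pow]
  rw [hval]
  -- rewrite the cardinality
  have hcard : ∀ N : ℕ,
      ((Finset.range N).filter fun n => (s (n + 1) : ℤ) - (s n : ℤ) = k).card
        = N / m + if (2 ^ j - 1) % m < N % m then 1 else 0 := by
    intro N
    have hfc : ((Finset.range N).filter fun n => (s (n + 1) : ℤ) - (s n : ℤ) = k)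
        = (Finset.range N).filter (· ≡ (2 ^ j - 1) [MOD m]) := by
      apply Finset.filter_congr
      intro n _
      have hrlt : (2:ℕ) ^ j - 1 < m := by
        have : (2:ℕ) ^ j < 2 ^ (j + 1) := by
          have : (2:ℕ) ^ (j+1) = 2 ^ j * 2 := pow_succ 2 j
          have := Nat.one_le_two_pow (n := j)
          omega
        omega
      have : ((s (n + 1) : ℤ) - (s n : ℤ) = k) ↔ n % m = 2 ^ j - 1 := by
        rw [show k = 1 - (j:ℤ) by omega]
        exact diff_iff j n
      rw [this]
      unfold Nat.ModEq
      rw [Nat.mod_eq_of_lt hrlt]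
    rw [hfc, ← Nat.count_eq_card_filter_range, Nat.count_modEq_card N hm]
  simp only [hcard]
  -- squeeze between 1/m - 1/N and 1/m + 1/N
  have hone : Filter.Tendsto (fun N : ℕ => 1 / (N:ℝ)) Filter.atTop (nhds 0) :=
    tendsto_one_div_atTop_nhds_zero_nat
  have hg : Filter.Tendsto (fun N : ℕ => 1 / (m:ℝ) - 1 / N) Filter.atTop (nhds (1 / (m:ℝ))) := by
    simpa using (tendsto_const_nhds (x := 1 / (m:ℝ)) (f := Filter.atTop (α := ℕ))).sub hone
  have hh : Filter.Tendsto (fun N : ℕ => 1 / (m:ℝ) + 1 / N) Filter.atTop (nhds (1 / (m:ℝ))) := by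
    simpa using (tendsto_const_nhds (x := 1 / (m:ℝ)) (f := Filter.atTop (α := ℕ))).add hone
  refine tendsto_of_tendsto_of_tendsto_of_le_of_le' hg hh ?_ ?_
  · filter_upwards [Filter.eventually_ge_atTop 1] with N hN
    have hNR : (0:ℝ) < (N:ℝ) := by exact_mod_cast hN
    have hreal : (N:ℝ) = (m:ℝ) * ((N / m : ℕ):ℝ) + ((N % m : ℕ):ℝ) := by
      exact_mod_cast (Nat.div_add_mod N m).symm
    have hmod : ((N % m : ℕ):ℝ) < (m:ℝ) := by exact_mod_cast Nat.mod_lt N hm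
    have hlow : (N:ℝ) / m - 1 ≤ ((N / m : ℕ):ℝ) := by
      rw [sub_le_iff_le_add, div_le_iff₀ hmR]
      nlinarith
    have heps : (0:ℝ) ≤ ((if (2 ^ j - 1) % m < N % m then 1 else 0 : ℕ) : ℝ) := by positivity
    calc 1 / (m:ℝ) - 1 / N = ((N:ℝ) / m - 1) / N := by field_simp
      _ ≤ ((N / m : ℕ):ℝ) / N := by gcongr
      _ ≤ ((N / m + if (2 ^ j - 1) % m < N % m then 1 else 0 : ℕ) : ℝ) / N := by
          gcongr
          exact Nat.le_add_right _ _
  · filter_upwards [Filter.eventually_ge_atTop 1] with N hN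
    have hNR : (0:ℝ) < (N:ℝ) := by exact_mod_cast hN
    have h2 : ((N / m : ℕ) : ℝ) ≤ (N:ℝ) / m := Nat.cast_div_le
    have h3 : ((if (2 ^ j - 1) % m < N % m then 1 else 0 : ℕ) : ℝ) ≤ 1 := by
      split <;> norm_num
    calc ((N / m + if (2 ^ j - 1) % m < N % m then 1 else 0 : ℕ) : ℝ) / N
        ≤ ((N:ℝ) / m + 1) / N := by
          gcongr
          push_cast at h2 h3 ⊢
          linarith
      _ = 1 / (m:ℝ) + 1 / N := by field_simp
end

section
/- Assume that Σ_{d≥0} P_t(d) > 1/2 for every odd integer t whose binary expansion (t_1 t_2 ⋯ t_n)_2 (with leading digit t_1 = 1) has n ≥ 3 digits and second-most-significant digit t_2 = 0. Then Σ_{d≥0} μ_t(d) > 1/2 for every integer t ≥ 1. -/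
/-- The probability mass functions `P t` on ℤ, defined by
`P 1 = δ₀`, `P (2t) = P t`, `P (2t+1) d = ½ P (t+1) (d+1) + ½ P t (d-1)`. -/
noncomputable def P : ℕ → ℤ → ℝ
  | 0, _ => 0
  | 1, d => if d = 0 then 1 else 0
  | (n+2), d =>
      if h : (n + 2) % 2 = 0 then P ((n+2)/2) d
      else (1/2) * P ((n+2)/2 + 1) (d+1) + (1/2) * P ((n+2)/2) (d-1)
  decreasing_by all_goals omega

/-- The geometric measure `μ₁`: `μ₁ k = (1/2)^(2-k)` for `k ≤ 1`, and `0` otherwise. -/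
noncomputable def mu1 (k : ℤ) : ℝ := if k ≤ 1 then (1/2 : ℝ) ^ (2 - k) else 0

/-- `μ t = μ₁ * P t`. -/
noncomputable def mu (t : ℕ) (d : ℤ) : ℝ := ∑' k : ℤ, mu1 k * P t (d - k)

lemma P_one (d : ℤ) : P 1 d = if d = 0 then 1 else 0 := by rw [P]

lemma P_eq (n : ℕ) (hn : 2 ≤ n) (d : ℤ) :
    P n d = if n % 2 = 0 then P (n/2) d
      else (1/2) * P (n/2 + 1) (d+1) + (1/2) * P (n/2) (d-1) := by
  obtain ⟨m, rfl⟩ : ∃ m, n = m + 2 := ⟨n - 2, by omega⟩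
  rw [P]
  split_ifs <;> rfl

lemma P_even (s : ℕ) (hs : 1 ≤ s) (d : ℤ) : P (2*s) d = P s d := by
  rw [P_eq (2*s) (by omega)]
  have h1 : (2*s) % 2 = 0 := by omega
  have h2 : (2*s) / 2 = s := by omega
  simp [h1, h2]

lemma P_odd (s : ℕ) (hs : 1 ≤ s) (d : ℤ) :
    P (2*s+1) d = (1/2) * P (s+1) (d+1) + (1/2) * P s (d-1) := by
  rw [P_eq (2*s+1) (by omega), if_neg (by omega), show (2*s+1)/2 = s from by omega]

lemma P_two_pow (j : ℕ) (d : ℤ) : P (2^j) d = P 1 d := by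
  induction j with
  | zero => rfl
  | succ j ih =>
      have h : 2^(j+1) = 2 * 2^j := by ring
      rw [h, P_even (2^j) (Nat.one_le_two_pow) d, ih]

lemma P_support : ∀ t : ℕ, 1 ≤ t → ∀ x : ℤ, ((t:ℤ) < x ∨ x < -(t:ℤ)) → P t x = 0 := by
  intro t
  induction t using Nat.strong_induction_on with
  | _ t IH =>
    intro ht x hx
    rcases eq_or_lt_of_le ht with h1 | h1
    · rw [← h1] at hx ⊢
      rw [P_one]
      have : x ≠ 0 := by push_cast at hx; omega
      simp [this]
    · rcases Nat.even_or_odd t with ⟨s, hs⟩ | ⟨s, hs⟩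
      · have hs1 : 1 ≤ s := by omega
        have ht2 : t = 2*s := by omega
        subst ht2
        rw [P_even s hs1]
        apply IH s (by omega) hs1
        push_cast at hx ⊢; omega
      · have hs1 : 1 ≤ s := by omega
        subst hs
        rw [P_odd s hs1]
        rw [IH (s+1) (by omega) (by omega) (x+1) (by push_cast at hx ⊢; omega),
            IH s (by omega) hs1 (x-1) (by push_cast at hx ⊢; omega)]
        ring

lemma summable_aux (t : ℕ) (ht : 1 ≤ t) (d : ℤ) :
    Summable (fun k : ℤ => mu1 k * P t (d - k)) := by
  apply summable_of_ne_finset_zero (s := Finset.Icc (d - t) (d + t))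
  intro k hk
  rw [Finset.mem_Icc] at hk
  have : P t (d - k) = 0 := P_support t ht _ (by omega)
  simp [this]

lemma mu1_rec (d : ℤ) :
    mu1 d = (1/2) * mu1 (d+1) + (if d = 1 then (1/2:ℝ) else 0) := by
  unfold mu1
  rcases lt_trichotomy d 1 with h | h | h
  · have h1 : d ≤ 1 := by omega
    have h2 : d + 1 ≤ 1 := by omega
    have h3 : d ≠ 1 := by omega
    simp only [if_pos h1, if_pos h2, if_neg h3]
    have : (2 - d) = 1 + (2 - (d+1)) := by ring
    rw [this, zpow_add₀ (by norm_num : (1/2:ℝ) ≠ 0), zpow_one]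
    ring
  · subst h; norm_num
  · have h1 : ¬ (d ≤ 1) := by omega
    have h2 : ¬ (d + 1 ≤ 1) := by omega
    have h3 : d ≠ 1 := by omega
    simp [h1, h2, h3]

lemma mu_one (d : ℤ) : mu 1 d = mu1 d := by
  unfold mu
  rw [tsum_eq_single d]
  · rw [P_one]; simp
  · intro k hk
    have : d - k ≠ 0 := by omega
    rw [P_one]; simp [this]

lemma mu_even (s : ℕ) (hs : 1 ≤ s) (d : ℤ) : mu (2*s) d = mu s d := by
  unfold mu
  exact tsum_congr fun k => by rw [P_even s hs]

lemma mu_odd (s : ℕ) (hs : 1 ≤ s) (d : ℤ) :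
    mu (2*s+1) d = (1/2) * mu (s+1) (d+1) + (1/2) * mu s (d-1) := by
  unfold mu
  have h1 := summable_aux (s+1) (by omega) (d+1)
  have h2 := summable_aux s hs (d-1)
  calc ∑' k : ℤ, mu1 k * P (2*s+1) (d - k)
      = ∑' k : ℤ, ((1/2) * (mu1 k * P (s+1) (d+1-k)) + (1/2) * (mu1 k * P s (d-1-k))) := by
        apply tsum_congr; intro k
        have e1 : d - k + 1 = d + 1 - k := by ring
        have e2 : d - k - 1 = d - 1 - k := by ring
        rw [P_odd s hs, e1, e2]; ring
    _ = (1/2) * mu (s+1) (d+1) + (1/2) * mu s (d-1) := by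
        rw [Summable.tsum_add (h1.mul_left _) (h2.mul_left _), tsum_mul_left, tsum_mul_left]
        rfl

lemma key_one : ∀ k : ℕ, ∀ d : ℤ, (2 - (k:ℤ) ≤ d) → P (2^k + 1) d = mu1 d := by
  intro k
  induction k with
  | zero =>
      intro d hd
      norm_num at hd
      rw [show (2:ℕ)^0 + 1 = 2*1 by norm_num, P_even 1 le_rfl, P_one]
      unfold mu1
      have h1 : d ≠ 0 := by omega
      have h2 : ¬ (d ≤ 1) := by omega
      simp [h1, h2]
  | succ k ih =>
      intro d hd
      rw [show (2:ℕ)^(k+1) + 1 = 2*(2^k) + 1 by ring,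
          P_odd (2^k) Nat.one_le_two_pow d, P_two_pow, P_one,
          ih (d+1) (by push_cast at hd ⊢; omega), mu1_rec d]
      have : (if d - 1 = 0 then (1:ℝ) else 0) = (if d = 1 then 1 else 0) := by
        split_ifs with a b b <;> first | rfl | omega
      rw [this]
      split_ifs <;> ring

lemma key_s3 : ∀ t : ℕ, 1 ≤ t → ∀ k : ℕ, 2*(t-1) ≤ 2^k → ∀ d : ℤ,
    2*(t:ℤ) - k ≤ d → P (2^k + t) d = mu t d := by
  intro t
  induction t using Nat.strong_induction_on with
  | _ t IH =>
    intro ht k hk d hd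
    rcases eq_or_lt_of_le ht with h1 | h1
    · rw [← h1] at hd ⊢
      rw [mu_one]
      exact key_one k d (by push_cast at hd ⊢; omega)
    · have hk1 : 1 ≤ k := by
        by_contra h
        have : k = 0 := by omega
        subst this
        simp at hk; omega
      obtain ⟨k', rfl⟩ : ∃ k', k = k' + 1 := ⟨k - 1, by omega⟩
      have hpow : (2:ℕ)^(k'+1) = 2 * 2^k' := by ring
      rcases Nat.even_or_odd t with ⟨s, hs⟩ | ⟨s, hs⟩
      · have hs1 : 1 ≤ s := by omega
        have ht2 : t = 2*s := by omega
        subst ht2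
        have h2 : 2^(k'+1) + 2*s = 2*(2^k' + s) := by rw [hpow]; ring
        rw [h2, P_even _ (by have := Nat.one_le_two_pow (n:=k'); omega), mu_even s hs1]
        apply IH s (by omega) hs1 k' (by rw [hpow] at hk; omega)
        push_cast at hd ⊢; omega
      · have hs1 : 1 ≤ s := by omega
        subst hs
        have h2 : 2^(k'+1) + (2*s+1) = 2*(2^k' + s) + 1 := by rw [hpow]; ring
        rw [h2, P_odd (2^k' + s) (by have := Nat.one_le_two_pow (n:=k'); omega), mu_odd s hs1]
        rw [hpow] at hk
        have e1 : (2:ℕ)^k' + s + 1 = 2^k' + (s+1) := by ring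
        rw [e1, IH (s+1) (by omega) (by omega) k' (by omega) (d+1) (by push_cast at hd ⊢; omega),
            IH s (by omega) hs1 k' (by omega) (d-1) (by push_cast at hd ⊢; omega)]

lemma getD_digits (b : ℕ) (hb : 1 < b) : ∀ i n : ℕ, (Nat.digits b n).getD i 0 = n / b^i % b := by
  intro i
  induction i with
  | zero =>
      intro n
      rcases Nat.eq_zero_or_pos n with rfl | hn
      · simp
      · rw [Nat.digits_def' hb hn]; simp
  | succ i ih =>
      intro n
      rcases Nat.eq_zero_or_pos n with rfl | hn
      · simp
      · rw [Nat.digits_def' hb hn, List.getD_cons_succ, ih (n / b),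
            Nat.div_div_eq_div_mul, ← pow_succ']

/-- If `∑_{d ≥ 0} P t d > 1/2` for every odd `t` whose binary expansion
`(t₁ t₂ ⋯ t_n)₂` has `n ≥ 3` digits and second-most-significant digit `t₂ = 0`
(note `Nat.digits 2 t` is little-endian, so `t₂` sits at index `length - 2`),
then `∑_{d ≥ 0} μ t d > 1/2` for every `t ≥ 1`. -/
theorem cusick_of_second_digit_zero
    (H : ∀ t : ℕ, t % 2 = 1 → 3 ≤ (Nat.digits 2 t).length →
      (Nat.digits 2 t).getD ((Nat.digits 2 t).length - 2) 0 = 0 →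
      (1 : ℝ) / 2 < ∑' d : ℕ, P t (d : ℤ)) :
    ∀ t : ℕ, 1 ≤ t → (1 : ℝ) / 2 < ∑' d : ℕ, mu t (d : ℤ) := by
  intro t
  induction t using Nat.strong_induction_on with
  | _ t IH =>
    intro ht
    rcases Nat.even_or_odd t with he | ho
    · obtain ⟨s, hs⟩ := he
      have hs1 : 1 ≤ s := by omega
      have ht2 : t = 2*s := by omega
      have hcong : ∀ d : ℕ, mu t (d:ℤ) = mu s (d:ℤ) := fun d => by
        rw [ht2, mu_even s hs1]
      rw [tsum_congr hcong]
      exact IH s (by omega) hs1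
    · have htmod : t % 2 = 1 := Nat.odd_iff.mp ho
      set k := 2*t + 2 with hkdef
      set T := 2^k + t with hT
      obtain ⟨m, hm⟩ : ∃ m, k = m + 1 := ⟨k - 1, by omega⟩
      have hpow : (2:ℕ)^k = 2^m * 2 := by rw [hm, pow_succ]
      have hmlt : m < 2^m := Nat.lt_two_pow_self (n := m)
      have htm : t < 2^m := by omega
      have htk : t < 2^k := by omega
      have hlog : Nat.log 2 T = k := by
        apply Nat.log_eq_of_pow_le_of_lt_pow (by omega)
        have : (2:ℕ)^(k+1) = 2*2^k := by ring
        omega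
      have hlen : (Nat.digits 2 T).length = k + 1 := by
        rw [Nat.digits_len 2 T one_lt_two (by omega), hlog]
      have hdig : (Nat.digits 2 T).getD ((Nat.digits 2 T).length - 2) 0 = 0 := by
        rw [hlen, show k + 1 - 2 = m from by omega, getD_digits 2 one_lt_two]
        have h2 : T = 2^m * 2 + t := by omega
        rw [h2, Nat.mul_add_div (by positivity), Nat.div_eq_of_lt htm]
      have hTmod : T % 2 = 1 := by omega
      have hcong : ∀ d : ℕ, mu t (d:ℤ) = P T (d:ℤ) := fun d =>
        (key_s3 t ht k (by omega) (d:ℤ) (by push_cast; omega)).symm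
      rw [tsum_congr hcong]
      exact H T hTmod (by omega) hdig
end
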